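/- Let N' ≥ 1 and n ≥ 2 be natural numbers, let P', p be real numbers, and set K = P' + 1 − ((p − 1)/(n − 1)) · (N' + 1). Then | ∑_{t=N'+1}^{N'+n} ( P' + (t − N' − 1) · (p − 1)/(n − 1) + 1 ) / t − ( n · (p − 1)/(n − 1) + K · (Real.log (N' + n) − Real.log N') ) | ≤ |K| · ( 1/N' − 1/(N' + n) ). -/

import Mathlib

lemma log_succ_bounds (m : ℝ) (hm : 1 ≤ m) :
    1/(m+1) ≤ Real.log (m+1) - Real.log m ∧ Real.log (m+1) - Real.log m ≤ 1/m := by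
  have hm0 : 0 < m := by linarith
  have hm1 : 0 < m + 1 := by linarith
  constructor
  · have h := Real.log_le_sub_one_of_pos (x := m / (m+1)) (by positivity)
    rw [Real.log_div (by positivity) (by positivity)] at h
    have : m / (m+1) - 1 = -(1/(m+1)) := by field_simp; ring
    rw [this] at h
    linarith
  · have h := Real.log_le_sub_one_of_pos (x := (m+1) / m) (by positivity)
    rw [Real.log_div (by positivity) (by positivity)] at h
    have : (m+1) / m - 1 = 1/m := by field_simp; ring
    rw [this] at h
    linarith

lemma harmonic_log_bounds (N : ℕ) (hN : 1 ≤ N) (n : ℕ) :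
    (∑ t ∈ Finset.Icc (N+1) (N+n), (1:ℝ)/t) ≤ Real.log ((N:ℝ)+n) - Real.log N ∧
    Real.log ((N:ℝ)+n) - Real.log N ≤
      (∑ t ∈ Finset.Icc (N+1) (N+n), (1:ℝ)/t) + (1/(N:ℝ) - 1/((N:ℝ)+n)) := by
  induction n with
  | zero => simp
  | succ n ih =>
    have hN0 : (1:ℝ) ≤ (N:ℝ) := by exact_mod_cast hN
    have hm : (1:ℝ) ≤ (N:ℝ) + n := by
      have : (0:ℝ) ≤ (n:ℝ) := Nat.cast_nonneg n
      linarith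
    obtain ⟨hlo, hhi⟩ := log_succ_bounds ((N:ℝ)+n) hm
    have hsum : (∑ t ∈ Finset.Icc (N+1) (N+(n+1)), (1:ℝ)/t)
        = (∑ t ∈ Finset.Icc (N+1) (N+n), (1:ℝ)/t) + 1/((N:ℝ)+n+1) := by
      have heq : N + (n+1) = (N+n) + 1 := by ring
      rw [heq, Finset.sum_Icc_succ_top (by omega)]
      push_cast; ring_nf
    have hcast : ((N:ℝ) + (n+1:ℕ)) = ((N:ℝ)+n) + 1 := by push_cast; ring
    rw [hsum, hcast]
    constructor
    · linarith [ih.1]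
    · linarith [ih.2]

/-- Error bound for the continuous (logarithmic) relaxation of the per-tie contribution
to tie-aware Average Precision. -/
theorem tie_aware_AP_relaxation_error (N' n : ℕ) (hN' : 1 ≤ N') (hn : 2 ≤ n)
    (P' p K : ℝ) (hK : K = P' + 1 - ((p - 1) / ((n : ℝ) - 1)) * ((N' : ℝ) + 1)) :
    |(∑ t ∈ Finset.Icc (N' + 1) (N' + n),
          (P' + ((t : ℝ) - (N' : ℝ) - 1) * (p - 1) / ((n : ℝ) - 1) + 1) / (t : ℝ)) -
        ((n : ℝ) * (p - 1) / ((n : ℝ) - 1) +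
          K * (Real.log ((N' : ℝ) + (n : ℝ)) - Real.log (N' : ℝ)))| ≤
      |K| * (1 / (N' : ℝ) - 1 / ((N' : ℝ) + (n : ℝ))) := by
  have hn1 : ((n : ℝ) - 1) ≠ 0 := by
    have : (2:ℝ) ≤ (n:ℝ) := by exact_mod_cast hn
    linarith
  -- rewrite each summand
  have hterm : ∀ t ∈ Finset.Icc (N' + 1) (N' + n),
      (P' + ((t : ℝ) - (N' : ℝ) - 1) * (p - 1) / ((n : ℝ) - 1) + 1) / (t : ℝ)
        = (p - 1) / ((n : ℝ) - 1) + K * (1 / (t : ℝ)) := by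
    intro t ht
    have ht1 : N' + 1 ≤ t := (Finset.mem_Icc.mp ht).1
    have ht0 : (t : ℝ) ≠ 0 := by
      have : 1 ≤ t := by omega
      positivity
    rw [hK]; field_simp; ring
  rw [Finset.sum_congr rfl hterm, Finset.sum_add_distrib, Finset.sum_const,
    ← Finset.mul_sum, Nat.card_Icc]
  have hcard : (N' + n + 1 - (N' + 1)) = n := by omega
  rw [hcard]
  obtain ⟨hlo, hhi⟩ := harmonic_log_bounds N' hN' n
  set S := ∑ t ∈ Finset.Icc (N' + 1) (N' + n), (1:ℝ)/t with hS
  set L := Real.log ((N' : ℝ) + (n : ℝ)) - Real.log (N' : ℝ) with hL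
  have hrw : n • ((p - 1) / ((n : ℝ) - 1)) + K * S -
      ((n : ℝ) * (p - 1) / ((n : ℝ) - 1) + K * L) = K * (S - L) := by
    simp only [nsmul_eq_mul]; ring
  rw [hrw, abs_mul]
  have hSL : |S - L| ≤ 1 / (N' : ℝ) - 1 / ((N' : ℝ) + (n : ℝ)) := by
    rw [abs_sub_comm, abs_of_nonneg (by linarith)]
    linarith
  exact mul_le_mul_of_nonneg_left hSL (abs_nonneg K)
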